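/- Let c₂ be a real number with c₂ ∉ {0, 1, 1/2, ±1/√5, -1}. Define v(α) = -((α+1)²((10α-5)c₂² - 15c₂α² + (α+1)(6α²-3α+1)))/(5c₂²-1), b̃₁(α) = (α²(α+1)(20c₂⁴ - (30α+10)c₂³ + (12α²+3α-13)c₂² + (4α²+11α+3)c₂ - 2α(α+1)))/(4c₂(5c₂²-1)(c₂+1)), b̃₂(α) = (α²(α+1)²(5c₂² - (4α-3)c₂ - 2α))/(4c₂(5c₂²-1)(c₂-1)), b₁(α) = (α(α+1)²(20c₂⁴ - (30α+20)c₂³ + (12α²+21α-4)c₂² + (-4α²+3α+4)c₂ - 2α(α+1)))/(4c₂(5c₂²-1)(c₂-1)), b₂(α) = -(α²(α+1)²(5c₂² - (4α+7)c₂ + 2α+2))/(4c₂(5c₂²-1)(c₂+1)). Then for all real α: -(1-v) + b̃₁ + b̃₂ + b₁ + b₂ = α, (1-v)/2 - b̃₁ - (1-c₂)b̃₂ + c₂b₂ = α²/2, -(1-v)/3 + b̃₁ + (1-c₂)²b̃₂ + c₂²b₂ = α³/3, (1-v)/4 - b̃₁ - (1-c₂)³b̃₂ + c₂³b₂ = α⁴/4,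 and -(1-v)/5 + b̃₁ + (1-c₂)⁴b̃₂ + c₂⁴b₂ = α⁵/5. -/
import Mathlib


set_option maxHeartbeats 4000000 in
/-- Uniform order-five conditions Γₖ = 0, k = 1,...,5, for the 2-stage explicit
TSGLM with abscissae c₁ = 0 and general c₂, with the order-five family
coefficients v, b̃₁, b̃₂, b₁, b₂. -/
theorem stmt4 (c₂ : ℝ) (h0 : c₂ ≠ 0) (h1 : c₂ ≠ 1) (hhalf : c₂ ≠ 1/2)
    (hs5 : c₂ ≠ 1 / Real.sqrt 5) (hs5' : c₂ ≠ -(1 / Real.sqrt 5))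
    (hm1 : c₂ ≠ -1) (α : ℝ) :
    (let v := -((α+1)^2 * ((10*α-5)*c₂^2 - 15*c₂*α^2 + (α+1)*(6*α^2-3*α+1))) /
        (5*c₂^2 - 1);
    let tb1 := (α^2*(α+1) * (20*c₂^4 - (30*α+10)*c₂^3 + (12*α^2+3*α-13)*c₂^2
        + (4*α^2+11*α+3)*c₂ - 2*α*(α+1))) / (4*c₂*(5*c₂^2-1)*(c₂+1));
    let tb2 := (α^2*(α+1)^2 * (5*c₂^2 - (4*α-3)*c₂ - 2*α)) /
        (4*c₂*(5*c₂^2-1)*(c₂-1));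
    let b1 := (α*(α+1)^2 * (20*c₂^4 - (30*α+20)*c₂^3 + (12*α^2+21*α-4)*c₂^2
        + (-4*α^2+3*α+4)*c₂ - 2*α*(α+1))) / (4*c₂*(5*c₂^2-1)*(c₂-1));
    let b2 := -(α^2*(α+1)^2 * (5*c₂^2 - (4*α+7)*c₂ + 2*α+2)) /
        (4*c₂*(5*c₂^2-1)*(c₂+1));
    -(1 - v) + tb1 + tb2 + b1 + b2 = α ∧
    (1 - v)/2 - tb1 - (1-c₂)*tb2 + c₂*b2 = α^2/2 ∧
    -(1 - v)/3 + tb1 + (1-c₂)^2*tb2 + c₂^2*b2 = α^3/3 ∧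
    (1 - v)/4 - tb1 - (1-c₂)^3*tb2 + c₂^3*b2 = α^4/4 ∧
    -(1 - v)/5 + tb1 + (1-c₂)^4*tb2 + c₂^4*b2 = α^5/5) := by
  have h5 : (5:ℝ)*c₂^2 - 1 ≠ 0 := by
    intro h
    have ha : (1/Real.sqrt 5)^2 = 1/5 := by
      rw [div_pow, one_pow, Real.sq_sqrt]; norm_num
    have : (c₂ - 1/Real.sqrt 5) * (c₂ + 1/Real.sqrt 5) = 0 := by
      have : c₂^2 - (1/Real.sqrt 5)^2 = 0 := by rw [ha]; linarith
      nlinarith [this]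
    rcases mul_eq_zero.1 this with h' | h'
    · exact hs5 (by linarith)
    · exact hs5' (by linarith)
  have hm1' : c₂ + 1 ≠ 0 := fun h => hm1 (by linarith)
  have h1' : c₂ - 1 ≠ 0 := sub_ne_zero.2 h1
  refine ⟨?_, ?_, ?_, ?_, ?_⟩ <;> · field_simp; ring
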